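/- Let A, Ã ∈ ℝ^{m×n} be entrywise nonnegative and let ε ≥ 0. If Ã ⊵_ε A, then Ã·1ₙ = A·1ₙ and Ãᵀ·1ₘ = Aᵀ·1ₘ; that is, every row sum of Ã equals the corresponding row sum of A, and every column sum of Ã equals the corresponding column sum of A. -/

import Mathlib

open Matrix ComplexOrder

/-- Row-sum degree matrix of `A`. -/
def rowDeg {α β : Type*} [Fintype α] [Fintype β] [DecidableEq α]
    (A : Matrix α β ℝ) : Matrix α α ℝ :=
  Matrix.diagonal fun i => ∑ j, A i j

/-- Column-sum degree matrix of `A`. -/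
def colDeg {α β : Type*} [Fintype α] [Fintype β] [DecidableEq β]
    (A : Matrix α β ℝ) : Matrix β β ℝ :=
  Matrix.diagonal fun j => ∑ i, A i j

/-- The error matrix `E := D_row − A · D_col⁻ · Aᵀ` (with `0⁻¹ = 0`). -/
noncomputable def errE {α β : Type*} [Fintype α] [Fintype β] [DecidableEq α] [DecidableEq β]
    (A : Matrix α β ℝ) : Matrix α α ℝ :=
  rowDeg A - A * Matrix.diagonal (fun j => (∑ i, A i j)⁻¹) * Aᵀ

/-- The error matrix `F := D_col − Aᵀ · D_row⁻ · A` (with `0⁻¹ = 0`). -/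
noncomputable def errF {α β : Type*} [Fintype α] [Fintype β] [DecidableEq α] [DecidableEq β]
    (A : Matrix α β ℝ) : Matrix β β ℝ :=
  colDeg A - Aᵀ * Matrix.diagonal (fun i => (∑ j, A i j)⁻¹) * A

/-- `Ã ⊵_ε A`: `Ã` is an `ε`-SV approximation of the entrywise-nonnegative matrix `A`,
with degree matrices given by the row and column sums of `A` (real matrices viewed as
complex for the bilinear-form inequality). -/
noncomputable def IsSVgApprox {α β : Type*} [Fintype α] [Fintype β] [DecidableEq α]
    [DecidableEq β] (ε : ℝ) (A Atil : Matrix α β ℝ) : Prop :=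
  (errE A).PosSemidef ∧ (errF A).PosSemidef ∧
  ∀ (x : α → ℂ) (y : β → ℂ),
    ‖star x ⬝ᵥ ((Atil - A).map fun a => (a : ℂ)).mulVec y‖ ≤
      ε / 4 * ((star x ⬝ᵥ ((errE A).map fun a => (a : ℂ)).mulVec x).re +
        (star y ⬝ᵥ ((errF A).map fun a => (a : ℂ)).mulVec y).re)

lemma errE_row_sum {α β : Type*} [Fintype α] [Fintype β] [DecidableEq α] [DecidableEq β]
    (A : Matrix α β ℝ) (hA : ∀ i j, 0 ≤ A i j) (i : α) :
    ∑ k, errE A i k = 0 := by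
  simp only [errE, rowDeg, Matrix.sub_apply, Matrix.mul_apply,
    Matrix.diagonal_apply, Matrix.transpose_apply,
    mul_ite, mul_zero, Finset.sum_ite_eq, Finset.sum_ite_eq', Finset.mem_univ, if_true]
  rw [Finset.sum_sub_distrib, Finset.sum_ite_eq Finset.univ i (fun _ => ∑ j, A i j)]
  simp only [Finset.mem_univ, if_true]
  rw [sub_eq_zero, Finset.sum_comm]
  refine Finset.sum_congr rfl fun j _ => ?_
  simp only [mul_assoc, ← Finset.mul_sum]
  rcases eq_or_lt_of_le (Finset.sum_nonneg fun k (_ : k ∈ Finset.univ) => hA k j) with h | h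
  · have h0 : A i j = 0 :=
      (Finset.sum_eq_zero_iff_of_nonneg (fun k _ => hA k j)).mp h.symm i (Finset.mem_univ i)
    simp [h0]
  · rw [inv_mul_cancel₀ (ne_of_gt h), mul_one]

lemma errF_eq_errE_transpose {α β : Type*} [Fintype α] [Fintype β] [DecidableEq α]
    [DecidableEq β] (A : Matrix α β ℝ) : errF A = errE Aᵀ := by
  simp [errF, errE, rowDeg, colDeg, Matrix.transpose_transpose]

lemma errF_row_sum {α β : Type*} [Fintype α] [Fintype β] [DecidableEq α] [DecidableEq β]
    (A : Matrix α β ℝ) (hA : ∀ i j, 0 ≤ A i j) (j : β) :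
    ∑ k, errF A j k = 0 := by
  rw [errF_eq_errE_transpose]
  exact errE_row_sum Aᵀ (fun i j => hA j i) j

lemma small_of_scale (c K : ℝ) (h : ∀ t : ℝ, 0 < t → t * |c| ≤ K * t ^ 2) : c = 0 := by
  by_contra hc
  have habs : 0 < |c| := abs_pos.mpr hc
  have h1 := h 1 one_pos
  have hK : 0 < K := by nlinarith
  have h2 := h (|c| / (2 * K)) (by positivity)
  have heq : K * (|c| / (2 * K)) ^ 2 = (|c| / (2 * K)) * (|c| / 2) := by
    field_simp
  rw [heq] at h2
  have ht : 0 < |c| / (2 * K) := by positivity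
  nlinarith

/-- SV approximation of nonnegative matrices exactly preserves all row sums
and all column sums. -/
theorem stmt_15 {m n : ℕ} (A Atil : Matrix (Fin m) (Fin n) ℝ)
    (hA : ∀ i j, 0 ≤ A i j) (hAtil : ∀ i j, 0 ≤ Atil i j)
    (ε : ℝ) (hε : 0 ≤ ε) (hSV : IsSVgApprox ε A Atil) :
    Atil.mulVec (fun _ => (1 : ℝ)) = A.mulVec (fun _ => (1 : ℝ)) ∧
    Atilᵀ.mulVec (fun _ => (1 : ℝ)) = Aᵀ.mulVec (fun _ => (1 : ℝ)) := by
  obtain ⟨-, -, hin⟩ := hSV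
  constructor
  · funext i
    simp only [mulVec, dotProduct, mul_one]
    rw [← sub_eq_zero, ← Finset.sum_sub_distrib]
    set c : ℝ := ∑ j, (Atil i j - A i j) with hc
    refine small_of_scale c (ε / 4 * errE A i i) fun t ht => ?_
    have h := hin (fun k => if k = i then (t : ℂ) else 0) (fun _ => 1)
    have e1 : (star (fun k => if k = i then (t : ℂ) else 0) ⬝ᵥ
        ((Atil - A).map fun a => (a : ℂ)).mulVec (fun _ => 1)) = ((t * c : ℝ) : ℂ) := by
      simp only [mulVec, dotProduct, Matrix.map_apply, Matrix.sub_apply, Pi.star_apply,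
        apply_ite (starRingEnd ℂ), map_zero, RCLike.star_def, Complex.conj_ofReal, ite_mul, zero_mul,
        Finset.sum_ite_eq', Finset.mem_univ, if_true, mul_one, hc]
      push_cast
      ring
    have e2 : (star (fun k => if k = i then (t : ℂ) else 0) ⬝ᵥ
        ((errE A).map fun a => (a : ℂ)).mulVec (fun k => if k = i then (t : ℂ) else 0)).re
        = t ^ 2 * errE A i i := by
      simp only [mulVec, dotProduct, Matrix.map_apply, Pi.star_apply,
        apply_ite (starRingEnd ℂ), map_zero, RCLike.star_def, Complex.conj_ofReal, ite_mul, zero_mul,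
        mul_ite, mul_zero, Finset.sum_ite_eq', Finset.mem_univ, if_true]
      push_cast
      rw [show ((t : ℂ) * ((errE A i i : ℂ) * t)) = (((t * (errE A i i * t)) : ℝ) : ℂ) by
        push_cast; ring, Complex.ofReal_re]
      ring
    have e3 : ((star (fun _ => (1 : ℂ)) : Fin n → ℂ) ⬝ᵥ
        ((errF A).map fun a => (a : ℂ)).mulVec (fun _ => 1)).re = 0 := by
      simp only [mulVec, dotProduct, Matrix.map_apply, Pi.star_apply, star_one, one_mul,
        mul_one]
      have : ∀ j : Fin n, ∑ k, ((errF A j k : ℂ)) = 0 := by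
        intro j
        rw [← Complex.ofReal_sum, errF_row_sum A hA j, Complex.ofReal_zero]
      rw [Finset.sum_congr rfl fun j _ => this j]
      simp
    rw [e1, e2, e3] at h
    rw [Complex.norm_real, Real.norm_eq_abs, abs_mul, abs_of_pos ht] at h
    calc t * |c| ≤ ε / 4 * (t ^ 2 * errE A i i + 0) := h
    _ = ε / 4 * errE A i i * t ^ 2 := by ring
  · funext j
    simp only [mulVec, dotProduct, mul_one, Matrix.transpose_apply]
    rw [← sub_eq_zero, ← Finset.sum_sub_distrib]
    set c : ℝ := ∑ i, (Atil i j - A i j) with hc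
    refine small_of_scale c (ε / 4 * errF A j j) fun t ht => ?_
    have h := hin (fun _ => 1) (fun k => if k = j then (t : ℂ) else 0)
    have e1 : ((star (fun _ => (1 : ℂ)) : Fin m → ℂ) ⬝ᵥ
        ((Atil - A).map fun a => (a : ℂ)).mulVec (fun k => if k = j then (t : ℂ) else 0))
        = ((t * c : ℝ) : ℂ) := by
      simp only [mulVec, dotProduct, Matrix.map_apply, Matrix.sub_apply, Pi.star_apply,
        star_one, one_mul, mul_ite, mul_zero, Finset.sum_ite_eq', Finset.mem_univ, if_true, hc]
      push_cast
      rw [← Finset.sum_mul, mul_comm]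
    have e2 : ((star (fun _ => (1 : ℂ)) : Fin m → ℂ) ⬝ᵥ
        ((errE A).map fun a => (a : ℂ)).mulVec (fun _ => 1)).re = 0 := by
      simp only [mulVec, dotProduct, Matrix.map_apply, Pi.star_apply, star_one, one_mul,
        mul_one]
      have : ∀ i : Fin m, ∑ k, ((errE A i k : ℂ)) = 0 := by
        intro i
        rw [← Complex.ofReal_sum, errE_row_sum A hA i, Complex.ofReal_zero]
      rw [Finset.sum_congr rfl fun i _ => this i]
      simp
    have e3 : (star (fun k => if k = j then (t : ℂ) else 0) ⬝ᵥ
        ((errF A).map fun a => (a : ℂ)).mulVec (fun k => if k = j then (t : ℂ) else 0)).re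
        = t ^ 2 * errF A j j := by
      simp only [mulVec, dotProduct, Matrix.map_apply, Pi.star_apply,
        apply_ite (starRingEnd ℂ), map_zero, RCLike.star_def, Complex.conj_ofReal, ite_mul, zero_mul,
        mul_ite, mul_zero, Finset.sum_ite_eq', Finset.mem_univ, if_true]
      push_cast
      rw [show ((t : ℂ) * ((errF A j j : ℂ) * t)) = (((t * (errF A j j * t)) : ℝ) : ℂ) by
        push_cast; ring, Complex.ofReal_re]
      ring
    rw [e1, e2, e3] at h
    rw [Complex.norm_real, Real.norm_eq_abs, abs_mul, abs_of_pos ht] at h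
    calc t * |c| ≤ ε / 4 * (0 + t ^ 2 * errF A j j) := h
    _ = ε / 4 * errF A j j * t ^ 2 := by ring
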